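/- Let U, Û ∈ ℝ^{p×r} have orthonormal columns, and let U^T Û = A S B^T be a singular value decomposition with A, B ∈ ℝ^{r×r} orthogonal. Then ‖Û B A^T − U‖₂ ≤ √2 · √(1 − λ_min²(U^T Û)) ≤ √2 ‖ÛÛ^T − UU^T‖₂. -/

import Mathlib

open Matrix

noncomputable def opNorm {m n : Type*} [Fintype m] [Fintype n] [DecidableEq n]
    (M : Matrix m n ℝ) : ℝ :=
  ‖LinearMap.toContinuousLinearMap (Matrix.toEuclideanLin M)‖

def frobSq {m n : Type*} [Fintype m] [Fintype n] (M : Matrix m n ℝ) : ℝ :=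
  ∑ i, ∑ j, (M i j) ^ 2

section Aux

lemma aux_mv_dot {m n : Type*} [Fintype m] [Fintype n] (M : Matrix m n ℝ)
    (u : n → ℝ) (w : m → ℝ) : (M *ᵥ u) ⬝ᵥ w = u ⬝ᵥ (Mᵀ *ᵥ w) := by
  rw [dotProduct_comm, Matrix.dotProduct_mulVec, dotProduct_comm,
    Matrix.mulVec_transpose]

lemma aux_dot_mulVec_mulVec {m n k : Type*} [Fintype m] [Fintype n] [Fintype k]
    (M : Matrix m n ℝ) (N : Matrix m k ℝ) (x : n → ℝ) (y : k → ℝ) :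
    (M *ᵥ x) ⬝ᵥ (N *ᵥ y) = x ⬝ᵥ ((Mᵀ * N) *ᵥ y) := by
  rw [aux_mv_dot, Matrix.mulVec_mulVec]

lemma aux_iso_dot {m n : Type*} [Fintype m] [Fintype n] [DecidableEq n] {M : Matrix m n ℝ}
    (hM : Mᵀ * M = 1) (x y : n → ℝ) : (M *ᵥ x) ⬝ᵥ (M *ᵥ y) = x ⬝ᵥ y := by
  rw [aux_dot_mulVec_mulVec, hM, Matrix.one_mulVec]

lemma aux_dot_self_nonneg {n : Type*} [Fintype n] (x : n → ℝ) : 0 ≤ x ⬝ᵥ x :=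
  Finset.sum_nonneg fun i _ => mul_self_nonneg (x i)

lemma aux_norm_sq_eq {n : ℕ} (x : EuclideanSpace ℝ (Fin n)) :
    ‖x‖ ^ 2 = (WithLp.equiv 2 (Fin n → ℝ) x) ⬝ᵥ (WithLp.equiv 2 (Fin n → ℝ) x) := by
  rw [EuclideanSpace.norm_eq, Real.sq_sqrt (by positivity)]
  simp [dotProduct, Real.norm_eq_abs, sq_abs, sq]

lemma aux_opNorm_nonneg {m n : Type*} [Fintype m] [Fintype n] [DecidableEq n]
    (M : Matrix m n ℝ) : 0 ≤ opNorm M := norm_nonneg _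

lemma aux_opNorm_le_of {m n : ℕ} (M : Matrix (Fin m) (Fin n) ℝ) {c : ℝ} (hc : 0 ≤ c)
    (h : ∀ x : Fin n → ℝ, (M *ᵥ x) ⬝ᵥ (M *ᵥ x) ≤ c ^ 2 * (x ⬝ᵥ x)) :
    opNorm M ≤ c := by
  refine ContinuousLinearMap.opNorm_le_bound _ hc fun x => ?_
  have h1 := h ((WithLp.equiv 2 (Fin n → ℝ)) x)
  have h2 : ‖(LinearMap.toContinuousLinearMap (Matrix.toEuclideanLin M)) x‖ ^ 2
      = (M *ᵥ (WithLp.equiv 2 (Fin n → ℝ)) x) ⬝ᵥ (M *ᵥ (WithLp.equiv 2 (Fin n → ℝ)) x) := by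
    rw [aux_norm_sq_eq]
    rfl
  have h3 : ‖x‖ ^ 2 = (WithLp.equiv 2 (Fin n → ℝ) x) ⬝ᵥ (WithLp.equiv 2 (Fin n → ℝ) x) :=
    aux_norm_sq_eq x
  nlinarith [norm_nonneg ((LinearMap.toContinuousLinearMap (Matrix.toEuclideanLin M)) x),
    norm_nonneg x, mul_nonneg hc (norm_nonneg x)]

lemma aux_dot_le_opNorm {m n : ℕ} (M : Matrix (Fin m) (Fin n) ℝ) (x : Fin n → ℝ) :
    (M *ᵥ x) ⬝ᵥ (M *ᵥ x) ≤ (opNorm M) ^ 2 * (x ⬝ᵥ x) := by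
  set L := LinearMap.toContinuousLinearMap (Matrix.toEuclideanLin M)
  have h1 := L.le_opNorm ((WithLp.equiv 2 (Fin n → ℝ)).symm x)
  have h2 : ‖L ((WithLp.equiv 2 (Fin n → ℝ)).symm x)‖ ^ 2 = (M *ᵥ x) ⬝ᵥ (M *ᵥ x) := by
    rw [aux_norm_sq_eq]; rfl
  have h3 : ‖(WithLp.equiv 2 (Fin n → ℝ)).symm x‖ ^ 2 = x ⬝ᵥ x := by
    rw [aux_norm_sq_eq]; rfl
  have hL : (0:ℝ) ≤ ‖L‖ := norm_nonneg _
  have hx : (0:ℝ) ≤ ‖(WithLp.equiv 2 (Fin n → ℝ)).symm x‖ := norm_nonneg _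
  have : opNorm M = ‖L‖ := rfl
  rw [this]
  nlinarith [norm_nonneg (L ((WithLp.equiv 2 (Fin n → ℝ)).symm x))]

end Aux

/-- Procrustes alignment bound: if Uᵀ Û = A S Bᵀ is an SVD (A, B orthogonal, S diagonal
with nonnegative entries), then ‖Û B Aᵀ − U‖₂ ≤ √2 √(1 − λ_min²(Uᵀ Û)) ≤ √2 ‖ÛÛᵀ − UUᵀ‖₂,
where λ_min(Uᵀ Û) is the smallest singular value, i.e. the smallest diagonal entry of S. -/
theorem procrustes_alignment_bound {p r : ℕ} (hr : 0 < r)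
    (U Uhat : Matrix (Fin p) (Fin r) ℝ) (A S B : Matrix (Fin r) (Fin r) ℝ)
    (hU : Uᵀ * U = 1) (hUhat : Uhatᵀ * Uhat = 1)
    (hA : Aᵀ * A = 1) (hA' : A * Aᵀ = 1)
    (hB : Bᵀ * B = 1) (hB' : B * Bᵀ = 1)
    (hS : S.IsDiag) (hSnn : ∀ i, 0 ≤ S i i)
    (hsvd : Uᵀ * Uhat = A * S * Bᵀ) :
    opNorm (Uhat * B * Aᵀ - U) ≤ Real.sqrt 2 * Real.sqrt (1 - (⨅ i, S i i) ^ 2)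
    ∧ Real.sqrt 2 * Real.sqrt (1 - (⨅ i, S i i) ^ 2)
        ≤ Real.sqrt 2 * opNorm (Uhat * Uhatᵀ - U * Uᵀ) := by
  haveI : Nonempty (Fin r) := Fin.pos_iff_nonempty.mp hr
  set s : ℝ := ⨅ i, S i i with hs_def
  have hbdd : BddBelow (Set.range fun i => S i i) :=
    Set.Finite.bddBelow (Set.finite_range _)
  have hsnn : 0 ≤ s := le_ciInf hSnn
  have hsle : ∀ i, s ≤ S i i := fun i => ciInf_le hbdd i
  -- S is symmetric
  have hSt : Sᵀ = S := by
    ext i j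
    by_cases h : i = j
    · subst h; rfl
    · rw [Matrix.transpose_apply, hS h, hS (Ne.symm h)]
  -- transposed SVD
  have hsvd' : Uhatᵀ * U = B * S * Aᵀ := by
    have h := congrArg Matrix.transpose hsvd
    simp only [Matrix.transpose_mul, Matrix.transpose_transpose, hSt] at h
    rw [h, Matrix.mul_assoc]
  -- Gram identities
  have G1 : (U * A)ᵀ * (U * A) = 1 := by
    calc (U * A)ᵀ * (U * A) = Aᵀ * ((Uᵀ * U) * A) := by
          simp only [Matrix.transpose_mul, Matrix.mul_assoc]
      _ = 1 := by rw [hU, Matrix.one_mul, hA]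
  have G2 : (Uhat * B)ᵀ * (Uhat * B) = 1 := by
    calc (Uhat * B)ᵀ * (Uhat * B) = Bᵀ * ((Uhatᵀ * Uhat) * B) := by
          simp only [Matrix.transpose_mul, Matrix.mul_assoc]
      _ = 1 := by rw [hUhat, Matrix.one_mul, hB]
  have G3 : (U * A)ᵀ * (Uhat * B) = S := by
    calc (U * A)ᵀ * (Uhat * B) = Aᵀ * ((Uᵀ * Uhat) * B) := by
          simp only [Matrix.transpose_mul, Matrix.mul_assoc]
      _ = Aᵀ * (A * S * Bᵀ * B) := by rw [hsvd]
      _ = (Aᵀ * A) * (S * (Bᵀ * B)) := by simp only [Matrix.mul_assoc]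
      _ = S := by rw [hA, hB, Matrix.mul_one, Matrix.one_mul]
  have G4 : (Uhat * B)ᵀ * (U * A) = S := by
    have h := congrArg Matrix.transpose G3
    rw [Matrix.transpose_mul, Matrix.transpose_transpose, hSt] at h
    exact h
  -- diagonal quadratic form
  have diag_dot : ∀ y : Fin r → ℝ, y ⬝ᵥ (S *ᵥ y) = ∑ i, S i i * (y i) ^ 2 := by
    intro y
    simp only [dotProduct, Matrix.mulVec]
    refine Finset.sum_congr rfl fun i _ => ?_
    rw [Finset.sum_eq_single i (fun j _ hj => by rw [hS (Ne.symm hj), zero_mul])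
        (fun h => absurd (Finset.mem_univ i) h)]
    ring
  -- e-vector facts
  have e_dot : ∀ i : Fin r, (Pi.single i 1 : Fin r → ℝ) ⬝ᵥ Pi.single i 1 = 1 := by
    intro i; rw [single_dotProduct]; simp
  -- s ≤ 1 via each S i i ≤ 1
  have hSle1 : ∀ i, S i i ≤ 1 := by
    intro i
    set e : Fin r → ℝ := Pi.single i 1 with he
    set u : Fin p → ℝ := (U * A) *ᵥ e with hu
    set w : Fin p → ℝ := (Uhat * B) *ᵥ e with hw
    have huu : u ⬝ᵥ u = 1 := by
      rw [hu, aux_dot_mulVec_mulVec, G1, Matrix.one_mulVec, e_dot]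
    have hww : w ⬝ᵥ w = 1 := by
      rw [hw, aux_dot_mulVec_mulVec, G2, Matrix.one_mulVec, e_dot]
    have huw : u ⬝ᵥ w = S i i := by
      rw [hu, hw, aux_dot_mulVec_mulVec, G3, Matrix.mulVec_single,
        single_dotProduct, one_mul]; simp
    have hwu : w ⬝ᵥ u = S i i := by rw [dotProduct_comm, huw]
    have h0 : 0 ≤ (u - w) ⬝ᵥ (u - w) := aux_dot_self_nonneg _
    rw [sub_dotProduct, dotProduct_sub, dotProduct_sub, huu, hww, huw, hwu] at h0
    linarith
  have hs1 : s ≤ 1 := le_trans (hsle ⟨0, hr⟩) (hSle1 ⟨0, hr⟩)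
  have h1s : 0 ≤ 1 - s ^ 2 := by nlinarith
  constructor
  · -- first bound
    refine aux_opNorm_le_of _ (by positivity) fun x => ?_
    have hc2 : (Real.sqrt 2 * Real.sqrt (1 - s ^ 2)) ^ 2 = 2 * (1 - s ^ 2) := by
      rw [mul_pow, Real.sq_sqrt (by norm_num), Real.sq_sqrt h1s]
    rw [hc2]
    set y : Fin r → ℝ := Aᵀ *ᵥ x with hy
    have hWx : (Uhat * B * Aᵀ - U) *ᵥ x = (Uhat * B) *ᵥ y - U *ᵥ x := by
      rw [Matrix.sub_mulVec, hy, Matrix.mulVec_mulVec]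
    have hyy : y ⬝ᵥ y = x ⬝ᵥ x := by
      rw [hy]
      have : Aᵀᵀ * Aᵀ = 1 := by rw [Matrix.transpose_transpose, hA']
      exact aux_iso_dot this x x
    have haa : ((Uhat * B) *ᵥ y) ⬝ᵥ ((Uhat * B) *ᵥ y) = x ⬝ᵥ x := by
      rw [aux_iso_dot G2, hyy]
    have hbb : (U *ᵥ x) ⬝ᵥ (U *ᵥ x) = x ⬝ᵥ x := aux_iso_dot hU x x
    have hab : ((Uhat * B) *ᵥ y) ⬝ᵥ (U *ᵥ x) = y ⬝ᵥ (S *ᵥ y) := by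
      rw [aux_dot_mulVec_mulVec]
      have : (Uhat * B)ᵀ * U = S * Aᵀ := by
        calc (Uhat * B)ᵀ * U = Bᵀ * (Uhatᵀ * U) := by
              simp only [Matrix.transpose_mul, Matrix.mul_assoc]
          _ = (Bᵀ * B) * (S * Aᵀ) := by rw [hsvd']; simp only [Matrix.mul_assoc]
          _ = S * Aᵀ := by rw [hB, Matrix.one_mul]
      rw [this, ← Matrix.mulVec_mulVec, ← hy]
    have hba : (U *ᵥ x) ⬝ᵥ ((Uhat * B) *ᵥ y) = y ⬝ᵥ (S *ᵥ y) := by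
      rw [dotProduct_comm, hab]
    have hdiag_ge : s * (x ⬝ᵥ x) ≤ y ⬝ᵥ (S *ᵥ y) := by
      rw [diag_dot, ← hyy]
      have : y ⬝ᵥ y = ∑ i, (y i) ^ 2 := by
        simp [dotProduct, sq]
      rw [this, Finset.mul_sum]
      exact Finset.sum_le_sum fun i _ =>
        mul_le_mul_of_nonneg_right (hsle i) (sq_nonneg _)
    have hxx : 0 ≤ x ⬝ᵥ x := aux_dot_self_nonneg x
    rw [hWx, sub_dotProduct, dotProduct_sub, dotProduct_sub, haa, hbb, hab, hba]
    nlinarith [mul_nonneg (mul_nonneg hsnn (by linarith : (0:ℝ) ≤ 1 - s)) hxx]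
  · -- second bound
    refine mul_le_mul_of_nonneg_left ?_ (Real.sqrt_nonneg 2)
    obtain ⟨i₀, hi₀⟩ := Finite.exists_min fun i => S i i
    have hseq : s = S i₀ i₀ := le_antisymm (hsle i₀) (le_ciInf hi₀)
    set e : Fin r → ℝ := Pi.single i₀ 1 with he
    set z : Fin p → ℝ := (Uhat * B) *ᵥ e with hz
    set w : Fin p → ℝ := (U * A) *ᵥ e with hw
    set D : Matrix (Fin p) (Fin p) ℝ := Uhat * Uhatᵀ - U * Uᵀ with hD
    have hSe : S *ᵥ e = S i₀ i₀ • e := by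
      ext j
      rw [Matrix.mulVec_single]
      by_cases h : j = i₀
      · subst h; simp [e]
      · simp [e, Pi.single_apply, h, hS h]
    have hDz : D *ᵥ z = z - S i₀ i₀ • w := by
      have hmat : D * (Uhat * B) = Uhat * B - (U * A) * S := by
        rw [hD, Matrix.sub_mul]
        congr 1
        · calc Uhat * Uhatᵀ * (Uhat * B) = Uhat * ((Uhatᵀ * Uhat) * B) := by
                simp only [Matrix.mul_assoc]
            _ = Uhat * B := by rw [hUhat, Matrix.one_mul]
        · calc U * Uᵀ * (Uhat * B) = U * ((Uᵀ * Uhat) * B) := by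
                simp only [Matrix.mul_assoc]
            _ = U * (A * S * Bᵀ * B) := by rw [hsvd]
            _ = (U * A) * (S * (Bᵀ * B)) := by simp only [Matrix.mul_assoc]
            _ = (U * A) * S := by rw [hB, Matrix.mul_one]
      have h2 : (U * A * S) *ᵥ e = S i₀ i₀ • w := by
        rw [← Matrix.mulVec_mulVec, hSe, Matrix.mulVec_smul, hw]
      rw [hz, Matrix.mulVec_mulVec, hmat, Matrix.sub_mulVec, h2]
    have hzz : z ⬝ᵥ z = 1 := by
      rw [hz, aux_dot_mulVec_mulVec, G2, Matrix.one_mulVec, e_dot]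
    have hww : w ⬝ᵥ w = 1 := by
      rw [hw, aux_dot_mulVec_mulVec, G1, Matrix.one_mulVec, e_dot]
    have hzw : z ⬝ᵥ w = S i₀ i₀ := by
      rw [hz, hw, aux_dot_mulVec_mulVec, G4, Matrix.mulVec_single,
        single_dotProduct, one_mul]; simp
    have hwz : w ⬝ᵥ z = S i₀ i₀ := by rw [dotProduct_comm, hzw]
    have hDdot : (D *ᵥ z) ⬝ᵥ (D *ᵥ z) = 1 - S i₀ i₀ ^ 2 := by
      rw [hDz]
      simp only [sub_dotProduct, dotProduct_sub, dotProduct_smul, smul_dotProduct,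
        smul_eq_mul, hzz, hww, hzw, hwz]
      ring
    have hle := aux_dot_le_opNorm D z
    rw [hDdot, hzz, mul_one] at hle
    have : Real.sqrt (1 - s ^ 2) ≤ Real.sqrt ((opNorm D) ^ 2) := by
      apply Real.sqrt_le_sqrt
      rw [hseq]; exact hle
    rwa [Real.sqrt_sq (aux_opNorm_nonneg D)] at this
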